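/- For the lemniscate r² = cos(2θ) in polar coordinates, the arc length from the point (1,0) (θ=0) to the point with radius r ∈ (0,1] equals ∫_r^1 dt/√(1-t⁴). Consequently, cleaf_2 of the arc length l from (1,0) equals the radial distance r of the corresponding point. -/

import Mathlib

open MeasureTheory intervalIntegral

private lemma lemn_integrable :
    IntervalIntegrable (fun t : ℝ => 1 / Real.sqrt (1 - t ^ 4)) volume 0 1 := by
  have hg : IntervalIntegrable (fun x : ℝ => (1 - x) ^ (-(1/2) : ℝ)) volume 0 1 := by
    have h := (intervalIntegrable_rpow' (a := 0) (b := 1) (r := -(1/2)) (by norm_num)).comp_sub_left 1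
    norm_num at h
    exact h.symm
  refine hg.mono_fun ?_ ?_
  · have hm : Measurable fun t : ℝ => 1 / Real.sqrt (1 - t ^ 4) := by fun_prop
    exact hm.aestronglyMeasurable.restrict
  · rw [Filter.EventuallyLE, ae_restrict_iff' measurableSet_uIoc]
    refine Filter.Eventually.of_forall fun x hx => ?_
    rw [Set.uIoc_of_le (by norm_num : (0:ℝ) ≤ 1)] at hx
    obtain ⟨hx0, hx1⟩ := hx
    have h1x : (0:ℝ) ≤ 1 - x := by linarith
    have hrw : (1 - x) ^ (-(1/2) : ℝ) = 1 / Real.sqrt (1 - x) := by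
      rw [Real.rpow_neg h1x, Real.sqrt_eq_rpow]; norm_num
    rw [Real.norm_eq_abs, Real.norm_eq_abs, hrw, abs_of_nonneg (by positivity),
      abs_of_nonneg (by positivity)]
    rcases eq_or_lt_of_le hx1 with h | h
    · subst h; norm_num
    · have hx4 : x ^ 4 ≤ x := by
        nlinarith [mul_nonneg (mul_nonneg hx0.le (by linarith : (0:ℝ) ≤ 1 - x))
          (by positivity : (0:ℝ) ≤ 1 + x + x ^ 2)]
      have hpos : 0 < Real.sqrt (1 - x) := Real.sqrt_pos.mpr (by linarith)
      have hle : Real.sqrt (1 - x) ≤ Real.sqrt (1 - x ^ 4) :=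
        Real.sqrt_le_sqrt (by linarith)
      exact one_div_le_one_div_of_le hpos hle

private lemma lemn_deriv (t : ℝ) (ht0 : 0 < t) (ht1 : t < 1) :
    Real.sqrt ((deriv (fun s => s * Real.cos (Real.arccos (s ^ 2) / 2)) t) ^ 2 +
      (deriv (fun s => s * Real.sin (Real.arccos (s ^ 2) / 2)) t) ^ 2)
      = 1 / Real.sqrt (1 - t ^ 4) := by
  have ht4 : t ^ 4 < 1 := pow_lt_one₀ ht0.le ht1 (by norm_num)
  have hS : 0 < 1 - t ^ 4 := by linarith
  have h1 : t ^ 2 ≠ -1 := ne_of_gt (by nlinarith)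
  have h2 : t ^ 2 ≠ 1 := ne_of_lt (by nlinarith)
  have hsq : HasDerivAt (fun s : ℝ => s ^ 2) (2 * t) t := by
    simpa using hasDerivAt_pow 2 t
  set θ := Real.arccos (t ^ 2) / 2 with hθdef
  set D := (-(1 / Real.sqrt (1 - (t ^ 2) ^ 2)) * (2 * t)) / 2 with hD
  have hac : HasDerivAt Real.arccos (-(1 / Real.sqrt (1 - (t ^ 2) ^ 2))) (t ^ 2) :=
    Real.hasDerivAt_arccos h1 h2
  have hcomp : HasDerivAt (fun s : ℝ => Real.arccos (s ^ 2))
      (-(1 / Real.sqrt (1 - (t ^ 2) ^ 2)) * (2 * t)) t := hac.comp (h := fun s : ℝ => s ^ 2) t hsq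
  have hθ : HasDerivAt (fun s : ℝ => Real.arccos (s ^ 2) / 2) D t := hcomp.div_const 2
  have hcos : HasDerivAt (fun s : ℝ => Real.cos (Real.arccos (s ^ 2) / 2))
      (-Real.sin θ * D) t :=
      (Real.hasDerivAt_cos (Real.arccos (t ^ 2) / 2)).comp (h := fun s : ℝ => Real.arccos (s ^ 2) / 2) t hθ
  have hsin : HasDerivAt (fun s : ℝ => Real.sin (Real.arccos (s ^ 2) / 2))
      (Real.cos θ * D) t :=
      (Real.hasDerivAt_sin (Real.arccos (t ^ 2) / 2)).comp (h := fun s : ℝ => Real.arccos (s ^ 2) / 2) t hθ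
  have hx : HasDerivAt (fun s : ℝ => s * Real.cos (Real.arccos (s ^ 2) / 2))
      (1 * Real.cos θ + t * (-Real.sin θ * D)) t := (hasDerivAt_id' (x := t)).mul hcos
  have hy : HasDerivAt (fun s : ℝ => s * Real.sin (Real.arccos (s ^ 2) / 2))
      (1 * Real.sin θ + t * (Real.cos θ * D)) t := (hasDerivAt_id' (x := t)).mul hsin
  rw [hx.deriv, hy.deriv]
  have hsc : Real.sin θ ^ 2 + Real.cos θ ^ 2 = 1 := Real.sin_sq_add_cos_sq θ
  have ht4eq : (t ^ 2) ^ 2 = t ^ 4 := by ring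
  have hSs : Real.sqrt (1 - t ^ 4) ^ 2 = 1 - t ^ 4 := Real.sq_sqrt hS.le
  have hSpos : 0 < Real.sqrt (1 - t ^ 4) := Real.sqrt_pos.mpr hS
  have hDval : D = -(t / Real.sqrt (1 - t ^ 4)) := by rw [hD, ht4eq]; ring
  have hD2 : D ^ 2 = t ^ 2 / (1 - t ^ 4) := by rw [hDval, neg_sq, div_pow, hSs]
  have hval : (1 * Real.cos θ + t * (-Real.sin θ * D)) ^ 2 +
      (1 * Real.sin θ + t * (Real.cos θ * D)) ^ 2 = 1 / (1 - t ^ 4) := by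
    calc (1 * Real.cos θ + t * (-Real.sin θ * D)) ^ 2 +
        (1 * Real.sin θ + t * (Real.cos θ * D)) ^ 2
        = (Real.sin θ ^ 2 + Real.cos θ ^ 2) +
          t ^ 2 * D ^ 2 * (Real.sin θ ^ 2 + Real.cos θ ^ 2) := by ring
      _ = 1 + t ^ 2 * (t ^ 2 / (1 - t ^ 4)) := by rw [hsc, hD2]; ring
      _ = 1 / (1 - t ^ 4) := by field_simp; ring
  rw [hval, one_div, Real.sqrt_inv, one_div]

theorem lemniscate_arc_length_cleaf (π₂ : ℝ) (hπ : π₂ = 2 * ∫ t in (0:ℝ)..1, 1 / Real.sqrt (1 - t ^ 4))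
    (cleaf : ℝ → ℝ)
    (hc : ∀ l ∈ Set.Icc 0 (π₂ / 2), cleaf l ∈ Set.Icc (0:ℝ) 1 ∧
      (∫ t in (cleaf l)..1, 1 / Real.sqrt (1 - t ^ 4)) = l) :
    ∀ r ∈ Set.Ioc (0:ℝ) 1,
      (∫ t in r..1,
        Real.sqrt ((deriv (fun s => s * Real.cos (Real.arccos (s ^ 2) / 2)) t) ^ 2 +
          (deriv (fun s => s * Real.sin (Real.arccos (s ^ 2) / 2)) t) ^ 2))
        = (∫ t in r..1, 1 / Real.sqrt (1 - t ^ 4)) ∧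
      cleaf (∫ t in r..1, 1 / Real.sqrt (1 - t ^ 4)) = r := by
  intro r hr
  obtain ⟨hr0, hr1⟩ := hr
  have hint := lemn_integrable
  have hsub : ∀ a b : ℝ, 0 ≤ a → a ≤ 1 → 0 ≤ b → b ≤ 1 →
      IntervalIntegrable (fun t : ℝ => 1 / Real.sqrt (1 - t ^ 4)) volume a b := by
    intro a b ha0 ha1 hb0 hb1
    refine hint.mono_set ?_
    rw [Set.uIcc_of_le (by norm_num : (0:ℝ) ≤ 1)]
    exact Set.uIcc_subset_Icc ⟨ha0, ha1⟩ ⟨hb0, hb1⟩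
  have hposint : ∀ a b : ℝ, 0 ≤ a → b ≤ 1 → a < b →
      0 < ∫ t in a..b, 1 / Real.sqrt (1 - t ^ 4) := by
    intro a b ha0 hb1 hab
    refine intervalIntegral_pos_of_pos_on (hsub a b ha0 (by linarith) (by linarith) hb1) ?_ hab
    intro x hx
    have hx4 : x ^ 4 < 1 :=
      pow_lt_one₀ (le_of_lt (lt_of_le_of_lt ha0 hx.1)) (lt_of_lt_of_le hx.2 hb1) (by norm_num)
    have : 0 < Real.sqrt (1 - x ^ 4) := Real.sqrt_pos.mpr (by linarith)
    positivity
  constructor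
  · -- integral congruence
    apply intervalIntegral.integral_congr_ae
    have h1 : ∀ᵐ x : ℝ, x ≠ (1:ℝ) := by
      rw [MeasureTheory.ae_iff]
      simp [Real.volume_singleton (a := 1)]
    filter_upwards [h1] with x hx1 hmem
    rw [Set.uIoc_of_le hr1] at hmem
    exact lemn_deriv x (lt_trans hr0 hmem.1) (lt_of_le_of_ne hmem.2 hx1)
  · -- cleaf part
    set l := ∫ t in r..1, 1 / Real.sqrt (1 - t ^ 4) with hl
    have hl0 : 0 ≤ l := by
      refine intervalIntegral.integral_nonneg hr1 fun u hu => by positivity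
    have hsplit : (∫ t in (0:ℝ)..r, 1 / Real.sqrt (1 - t ^ 4)) + l
        = ∫ t in (0:ℝ)..1, 1 / Real.sqrt (1 - t ^ 4) :=
      intervalIntegral.integral_add_adjacent_intervals
        (hsub 0 r le_rfl (by norm_num) hr0.le hr1) (hsub r 1 hr0.le hr1 (by norm_num) le_rfl)
    have hfirst : 0 ≤ ∫ t in (0:ℝ)..r, 1 / Real.sqrt (1 - t ^ 4) :=
      intervalIntegral.integral_nonneg hr0.le fun u hu => by positivity
    have hl1 : l ≤ π₂ / 2 := by
      rw [hπ]; linarith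
    obtain ⟨⟨hc0, hc1⟩, hce⟩ := hc l ⟨hl0, hl1⟩
    rcases lt_trichotomy (cleaf l) r with h | h | h
    · exfalso
      have hadd : (∫ t in (cleaf l)..r, 1 / Real.sqrt (1 - t ^ 4)) + l
          = ∫ t in (cleaf l)..1, 1 / Real.sqrt (1 - t ^ 4) :=
        intervalIntegral.integral_add_adjacent_intervals
          (hsub (cleaf l) r hc0 hc1 hr0.le hr1) (hsub r 1 hr0.le hr1 (by norm_num) le_rfl)
      have hpos := hposint (cleaf l) r hc0 hr1 h
      rw [hce] at hadd
      linarith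
    · exact h
    · exfalso
      have hadd : (∫ t in r..(cleaf l), 1 / Real.sqrt (1 - t ^ 4)) +
          (∫ t in (cleaf l)..1, 1 / Real.sqrt (1 - t ^ 4)) = l :=
        intervalIntegral.integral_add_adjacent_intervals
          (hsub r (cleaf l) hr0.le hr1 hc0 hc1) (hsub (cleaf l) 1 hc0 hc1 (by norm_num) le_rfl)
      have hpos := hposint r (cleaf l) hr0.le hc1 h
      rw [hce] at hadd
      linarith
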